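/- If the features are full rank, the feature-dependent eigenvalues reduce to those of the normalized Laplacian: suppose D = |X| and that Φ_n is invertible. Then the multiset of eigenvalues of I_D − Σ(φ)^{−1/2} Σ(φ̄) Σ(φ)^{−1/2} equals the multiset of eigenvalues of the normalized Laplacian L_n = I − A_n. -/

import Mathlib

open Matrix Finset

variable {Xb X : Type*} [Fintype Xb] [Fintype X] [DecidableEq Xb] [DecidableEq X]

/-- Marginal probability `w(x) = ∑_{x̄} w(x̄)·w(x|x̄)` of an augmentation. -/
noncomputable def wX (wb : Xb → ℝ) (wc : Xb → X → ℝ) (x : X) : ℝ := ∑ xb, wb xb * wc xb x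

/-- Input–augmentation joint matrix `Ā[x̄,x] = w(x̄,x)`. -/
noncomputable def Abar (wb : Xb → ℝ) (wc : Xb → X → ℝ) : Matrix Xb X ℝ :=
  Matrix.of fun xb x => wb xb * wc xb x

/-- Normalized input–augmentation matrix `Ā_n = D̄^{-1/2} Ā D^{-1/2}`. -/
noncomputable def AbarN (wb : Xb → ℝ) (wc : Xb → X → ℝ) : Matrix Xb X ℝ :=
  (Matrix.diagonal fun xb => (Real.sqrt (wb xb))⁻¹) * Abar wb wc *
    (Matrix.diagonal fun x => (Real.sqrt (wX wb wc x))⁻¹)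

/-- Similarity matrix `A[x,x'] = w(x,x')`. -/
noncomputable def Amat (wb : Xb → ℝ) (wc : Xb → X → ℝ) : Matrix X X ℝ :=
  Matrix.of fun x x' => ∑ xb, wb xb * wc xb x * wc xb x'

/-- Normalized similarity matrix `A_n = D^{-1/2} A D^{-1/2}`. -/
noncomputable def AN (wb : Xb → ℝ) (wc : Xb → X → ℝ) : Matrix X X ℝ :=
  (Matrix.diagonal fun x => (Real.sqrt (wX wb wc x))⁻¹) * Amat wb wc *
    (Matrix.diagonal fun x => (Real.sqrt (wX wb wc x))⁻¹)

/-- Normalized matrix of a map `f` w.r.t. weights `w`: rows `√(w x) · f x`. -/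
noncomputable def Nmat {ι : Type*} (w : X → ℝ) (f : X → ι → ℝ) : Matrix X ι ℝ :=
  Matrix.of fun x i => Real.sqrt (w x) * f x i

/-- `P` is the orthogonal projection onto the column space of `B`. -/
def IsProjOnto {n m : Type*} [Fintype n] [Fintype m]
    (P : Matrix n n ℝ) (B : Matrix n m ℝ) : Prop :=
  P.IsSymm ∧ P * P = P ∧ LinearMap.range P.mulVecLin = LinearMap.range B.mulVecLin

/-- Squared Frobenius norm. -/
noncomputable def frobSq {n m : Type*} [Fintype n] [Fintype m] (M : Matrix n m ℝ) : ℝ :=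
  ∑ i, ∑ j, M i j ^ 2

/-- Spectral contrastive loss. -/
noncomputable def Lspec {d : ℕ} (wb : Xb → ℝ) (wc : Xb → X → ℝ) (f : X → Fin d → ℝ) : ℝ :=
  -2 * ∑ x, ∑ x', (∑ xb, wb xb * wc xb x * wc xb x') * (∑ i, f x i * f x' i)
    + ∑ x, ∑ x', wX wb wc x * wX wb wc x' * (∑ i, f x i * f x' i) ^ 2

/-- Augmentation-averaged representation `f̄(x̄) = ∑_x w(x|x̄) f(x)`. -/
noncomputable def fbar {ι : Type*} (wc : Xb → X → ℝ) (f : X → ι → ℝ) (xb : Xb) (i : ι) : ℝ :=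
  ∑ x, wc xb x * f x i

/-- Downstream classification loss. -/
noncomputable def Lclf {d : ℕ} (wb : Xb → ℝ) (wc : Xb → X → ℝ) (f : X → Fin d → ℝ)
    (ystar : Xb → ℝ) : ℝ :=
  ⨅ v : Fin d → ℝ,
    ∑ xb, wb xb * (if ystar xb * (∑ i, v i * fbar wc f xb i) < 0 then (1 : ℝ) else 0)

/-- Regression loss of features `φ` on a target `g` over augmentations. -/
noncomputable def LregPhi {ι : Type*} [Fintype ι] (w : X → ℝ) (φ : X → ι → ℝ) (g : X → ℝ) : ℝ :=
  ⨅ v : ι → ℝ, ∑ x, w x * ((∑ i, v i * φ x i) - g x) ^ 2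

/-- Inconsistency `Δ(g, y*)`. -/
noncomputable def Delta (wb : Xb → ℝ) (wc : Xb → X → ℝ) (g : X → ℝ) (ystar : Xb → ℝ) : ℝ :=
  ∑ xb, wb xb * ∑ x, wc xb x * (if g x ≠ ystar xb then (1 : ℝ) else 0)

/-- Feature covariance `Σ(φ) = ∑_x w(x)·φ(x)φ(x)ᵀ`. -/
noncomputable def SigmaPhi {ι : Type*} [Fintype ι] (w : X → ℝ) (φ : X → ι → ℝ) :
    Matrix ι ι ℝ :=
  Matrix.of fun i j => ∑ x, w x * φ x i * φ x j

/-- Averaged-feature covariance `Σ(φ̄) = ∑_{x̄} w(x̄)·φ̄(x̄)φ̄(x̄)ᵀ`. -/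
noncomputable def SigmaBar {ι : Type*} [Fintype ι] (wb : Xb → ℝ) (wc : Xb → X → ℝ)
    (φ : X → ι → ℝ) : Matrix ι ι ℝ :=
  Matrix.of fun i j => ∑ xb, wb xb * fbar wc φ xb i * fbar wc φ xb j

section AuxSpectral
open Polynomial

lemma charpoly_conj_of_mul_eq_one {n : Type*} [Fintype n] [DecidableEq n]
    (Q M : Matrix n n ℝ) (h1 : Qᵀ * Q = 1) :
    (Qᵀ * M * Q).charpoly = M.charpoly := by
  unfold Matrix.charpoly
  have hmap : ∀ (A B : Matrix n n ℝ), (A * B).map (C : ℝ →+* ℝ[X]) = A.map C * B.map C :=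
    fun A B => Matrix.map_mul
  have key : charmatrix (Qᵀ * M * Q) = (Qᵀ.map C) * charmatrix M * (Q.map C) := by
    unfold charmatrix
    simp only [RingHom.mapMatrix_apply, Matrix.mul_sub, Matrix.sub_mul]
    congr 1
    · rw [((scalar_commute (X : ℝ[X]) (fun r => Commute.all _ _) (Qᵀ.map C)).symm.eq),
        Matrix.mul_assoc, ← hmap, h1]
      simp
    · rw [hmap, hmap]
  rw [key, det_mul, det_mul]
  have h2 : (Qᵀ.map (C : ℝ →+* ℝ[X])).det * (Q.map C).det = 1 := by
    rw [← det_mul, ← hmap, h1]; simp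
  calc (Qᵀ.map (C : ℝ →+* ℝ[X])).det * (charmatrix M).det * (Q.map C).det
      = (Qᵀ.map (C : ℝ →+* ℝ[X])).det * (Q.map C).det * (charmatrix M).det := by ring
    _ = (charmatrix M).det := by rw [h2, one_mul]

lemma AbarN_apply (wb : Xb → ℝ) (wc : Xb → X → ℝ) (xb : Xb) (x : X) :
    AbarN wb wc xb x
      = (Real.sqrt (wb xb))⁻¹ * (wb xb * wc xb x) * (Real.sqrt (wX wb wc x))⁻¹ := by
  simp [AbarN, Abar, mul_diagonal, diagonal_mul]

lemma AN_apply (wb : Xb → ℝ) (wc : Xb → X → ℝ) (x x' : X) :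
    AN wb wc x x'
      = (Real.sqrt (wX wb wc x))⁻¹ * (∑ xb, wb xb * wc xb x * wc xb x')
          * (Real.sqrt (wX wb wc x'))⁻¹ := by
  simp [AN, Amat, mul_diagonal, diagonal_mul]

lemma lemA (w : X → ℝ) (hw : ∀ x, 0 ≤ w x) (φ : X → X → ℝ) :
    SigmaPhi w φ = (Nmat w φ)ᵀ * Nmat w φ := by
  ext i j
  simp only [SigmaPhi, Nmat, Matrix.mul_apply, transpose_apply, of_apply]
  refine Finset.sum_congr rfl fun x _ => ?_
  have h : Real.sqrt (w x) * Real.sqrt (w x) = w x := Real.mul_self_sqrt (hw x)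
  linear_combination (-(φ x i * φ x j)) * h

lemma lemB (wb : Xb → ℝ) (wc : Xb → X → ℝ) (hwb : ∀ xb, 0 < wb xb)
    (hwx : ∀ x, 0 < wX wb wc x) (φ : X → X → ℝ) :
    AbarN wb wc * Nmat (wX wb wc) φ
      = Matrix.of (fun xb i => Real.sqrt (wb xb) * fbar wc φ xb i) := by
  ext xb i
  simp only [Matrix.mul_apply, AbarN_apply, Nmat, fbar, of_apply, Finset.mul_sum]
  refine Finset.sum_congr rfl fun x _ => ?_
  have h1 : Real.sqrt (wX wb wc x) ≠ 0 := Real.sqrt_ne_zero'.2 (hwx x)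
  have hb : Real.sqrt (wb xb) ≠ 0 := Real.sqrt_ne_zero'.2 (hwb xb)
  have h2 : Real.sqrt (wb xb) * Real.sqrt (wb xb) = wb xb := Real.mul_self_sqrt (hwb xb).le
  have e1 : (Real.sqrt (wX wb wc x))⁻¹ * Real.sqrt (wX wb wc x) = 1 := inv_mul_cancel₀ h1
  have e2 : (Real.sqrt (wb xb))⁻¹ * wb xb = Real.sqrt (wb xb) := by
    rw [inv_mul_eq_div, div_eq_iff hb]; exact h2.symm
  linear_combination wc xb x * φ x i * (Real.sqrt (wb xb))⁻¹ * wb xb * e1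
    + wc xb x * φ x i * e2

lemma lemC (wb : Xb → ℝ) (wc : Xb → X → ℝ) (hwb : ∀ xb, 0 < wb xb) :
    AN wb wc = (AbarN wb wc)ᵀ * AbarN wb wc := by
  ext x x'
  simp only [Matrix.mul_apply, AN_apply, AbarN_apply, transpose_apply, Finset.sum_mul,
    Finset.mul_sum]
  refine Finset.sum_congr rfl fun xb _ => ?_
  have hb : Real.sqrt (wb xb) ≠ 0 := Real.sqrt_ne_zero'.2 (hwb xb)
  have h2 : Real.sqrt (wb xb) * Real.sqrt (wb xb) = wb xb := Real.mul_self_sqrt (hwb xb).le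
  have e2 : (Real.sqrt (wb xb))⁻¹ * wb xb = Real.sqrt (wb xb) := by
    rw [inv_mul_eq_div, div_eq_iff hb]; exact h2.symm
  set c := (Real.sqrt (wX wb wc x))⁻¹ * (Real.sqrt (wX wb wc x'))⁻¹ * wc xb x * wc xb x' with hc
  linear_combination (-c) * ((Real.sqrt (wb xb))⁻¹ * wb xb + Real.sqrt (wb xb)) * e2
    + (-c) * h2

lemma lemD (wb : Xb → ℝ) (wc : Xb → X → ℝ) (hwb : ∀ xb, 0 < wb xb)
    (hwx : ∀ x, 0 < wX wb wc x) (φ : X → X → ℝ) :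
    SigmaBar wb wc φ = (Nmat (wX wb wc) φ)ᵀ * AN wb wc * Nmat (wX wb wc) φ := by
  have hM : SigmaBar wb wc φ
      = (AbarN wb wc * Nmat (wX wb wc) φ)ᵀ * (AbarN wb wc * Nmat (wX wb wc) φ) := by
    rw [lemB wb wc hwb hwx φ]
    ext i j
    simp only [SigmaBar, Matrix.mul_apply, transpose_apply, of_apply]
    refine Finset.sum_congr rfl fun xb _ => ?_
    have h2 : Real.sqrt (wb xb) * Real.sqrt (wb xb) = wb xb := Real.mul_self_sqrt (hwb xb).le
    linear_combination (-(fbar wc φ xb i * fbar wc φ xb j)) * h2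
  rw [hM, transpose_mul, lemC wb wc hwb]
  simp [Matrix.mul_assoc]

end AuxSpectral

/-- if the features are full rank (`D = |X|` — features indexed by `X`
itself — and `Φ_n` invertible), then the eigenvalue multiset of
`I − Σ(φ)^{-1/2} Σ(φ̄) Σ(φ)^{-1/2}` equals the eigenvalue multiset of the normalized
Laplacian `L_n = I − A_n`, stated via equality of the multisets of roots of the
characteristic polynomials. `R` is a symmetric square root of `Σ(φ)⁻¹`. -/
theorem full_rank_features_reduce_to_laplacian [Nonempty Xb] [Nonempty X]
    (wb : Xb → ℝ) (wc : Xb → X → ℝ)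
    (hwb : ∀ xb, 0 < wb xb) (hwbsum : ∑ xb, wb xb = 1)
    (hwc : ∀ xb x, 0 ≤ wc xb x) (hwcsum : ∀ xb, ∑ x, wc xb x = 1)
    (hwx : ∀ x, 0 < wX wb wc x)
    (φ : X → X → ℝ) (hPhi : IsUnit (Nmat (wX wb wc) φ))
    (R : Matrix X X ℝ) (hR : R.IsSymm)
    (hRR : R * R = (SigmaPhi (wX wb wc) φ)⁻¹) :
    (1 - R * SigmaBar wb wc φ * R).charpoly.roots
      = (1 - AN wb wc).charpoly.roots := by
  set Φ := Nmat (wX wb wc) φ with hΦ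
  have hSP : SigmaPhi (wX wb wc) φ = Φᵀ * Φ := lemA _ (fun x => (hwx x).le) φ
  have hΦd : IsUnit Φ.det := (Matrix.isUnit_iff_isUnit_det Φ).mp hPhi
  have hSd : IsUnit (SigmaPhi (wX wb wc) φ).det := by
    rw [hSP, det_mul, det_transpose]; exact hΦd.mul hΦd
  have h1 : R * R * SigmaPhi (wX wb wc) φ = 1 := by
    rw [hRR]; exact nonsing_inv_mul _ hSd
  have hRd : IsUnit R.det := by
    refine IsUnit.of_mul_eq_one (a := R.det) (R.det * (SigmaPhi (wX wb wc) φ).det) ?_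
    rw [← mul_assoc, ← det_mul, ← det_mul, h1, det_one]
  rw [Matrix.mul_assoc] at h1
  have h2 : R⁻¹ = R * SigmaPhi (wX wb wc) φ := inv_eq_right_inv h1
  have hOne : R * SigmaPhi (wX wb wc) φ * R = 1 := by
    rw [← h2]; exact nonsing_inv_mul R hRd
  have hT : (Φ * R)ᵀ = R * Φᵀ := by rw [transpose_mul, hR]
  have hq : (Φ * R)ᵀ * (Φ * R) = 1 := by
    rw [hT]
    calc R * Φᵀ * (Φ * R) = R * SigmaPhi (wX wb wc) φ * R := by
          rw [hSP]; simp [Matrix.mul_assoc]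
      _ = 1 := hOne
  have hfin : (1 : Matrix X X ℝ) - R * SigmaBar wb wc φ * R
      = (Φ * R)ᵀ * (1 - AN wb wc) * (Φ * R) := by
    rw [hT, Matrix.mul_sub, Matrix.mul_one, Matrix.sub_mul, lemD wb wc hwb hwx φ]
    congr 1
    · calc (1 : Matrix X X ℝ) = R * SigmaPhi (wX wb wc) φ * R := hOne.symm
        _ = R * Φᵀ * (Φ * R) := by rw [hSP]; simp [Matrix.mul_assoc]
    · simp [Matrix.mul_assoc, hΦ]
  rw [hfin, charpoly_conj_of_mul_eq_one _ _ hq]
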